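/- Let G1 and G2 be graphs on n1 ≥ 1 and n2 ≥ 1 vertices and with m1 and m2 edges, respectively, and let G = G1 ∧ G2 be their join. Then min{ m1/n1 + n2/2 , m2/n2 + n1/2 } ≤ χ⃗(G). -/

import Mathlib

open SimpleGraph

/-- An orientation of a simple graph `G`: each edge gets exactly one direction.
`dir u v = true` means the edge `uv` is oriented from `u` toward `v` (head `v`). -/
structure Orient {V : Type*} (G : SimpleGraph V) where
  dir : V → V → Bool
  adj_of_dir : ∀ u v, dir u v = true → G.Adj u v
  dir_iff : ∀ u v, G.Adj u v → (dir u v = true ↔ ¬ dir v u = true)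

/-- The indegree of a vertex in an orientation. -/
def Orient.inDeg {V : Type*} [Fintype V] {G : SimpleGraph V} (D : Orient G) (v : V) : ℕ :=
  (Finset.univ.filter (fun u => D.dir u v = true)).card

/-- An orientation is proper if adjacent vertices have distinct indegrees. -/
def Orient.Proper {V : Type*} [Fintype V] {G : SimpleGraph V} (D : Orient G) : Prop :=
  ∀ u v, G.Adj u v → D.inDeg u ≠ D.inDeg v

/-- The proper orientation number: the least `k` such that `G` admits a proper
`k`-orientation (an orientation with all indegrees at most `k`). -/
noncomputable def properOrientNum {V : Type*} [Fintype V] (G : SimpleGraph V) : ℕ :=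
  sInf {k | ∃ D : Orient G, D.Proper ∧ ∀ v, D.inDeg v ≤ k}

/-- The join of two graphs: their disjoint union plus all edges between the two parts. -/
def graphJoin {V1 V2 : Type*} (G1 : SimpleGraph V1) (G2 : SimpleGraph V2) :
    SimpleGraph (V1 ⊕ V2) where
  Adj x y :=
    match x, y with
    | .inl a, .inl b => G1.Adj a b
    | .inr a, .inr b => G2.Adj a b
    | .inl _, .inr _ => True
    | .inr _, .inl _ => True
  symm := by
    constructor
    rintro (a | a) (b | b) h <;> simp_all <;> exact h.symm
  loopless := by
    constructor
    rintro (a | a) h <;> simp_all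

section Exist
variable {V : Type*} [Fintype V] {G : SimpleGraph V}

open scoped Classical in
noncomputable def someOrient (G : SimpleGraph V) : Orient G where
  dir u v := decide (G.Adj u v ∧ (Fintype.equivFin V u : ℕ) < Fintype.equivFin V v)
  adj_of_dir u v h := by
    simp only [decide_eq_true_iff] at h
    exact h.1
  dir_iff u v h := by
    have hne : (Fintype.equivFin V u : ℕ) ≠ (Fintype.equivFin V v : ℕ) := by
      intro hc
      exact h.ne (Fintype.equivFin V |>.injective (Fin.ext hc))
    simp only [decide_eq_true_iff]
    constructor
    · rintro ⟨-, h1⟩ ⟨-, h2⟩; omega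
    · intro h1
      refine ⟨h, ?_⟩
      by_contra h2
      exact h1 ⟨h.symm, by omega⟩

open scoped Classical in
noncomputable def Orient.flip (D : Orient G) (u v : V) (h : D.dir u v = true) : Orient G where
  dir a b := if a = u ∧ b = v then false else if a = v ∧ b = u then true else D.dir a b
  adj_of_dir a b hb := by
    by_cases h1 : a = u ∧ b = v
    · simp [h1] at hb
    · by_cases h2 : a = v ∧ b = u
      · obtain ⟨rfl, rfl⟩ := h2
        exact (D.adj_of_dir _ _ h).symm
      · simp only [if_neg h1, if_neg h2] at hb
        exact D.adj_of_dir _ _ hb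
  dir_iff a b hab := by
    have hne : u ≠ v := (D.adj_of_dir _ _ h).ne
    by_cases h1 : a = u ∧ b = v
    · obtain ⟨rfl, rfl⟩ := h1
      simp [hne, hne.symm]
    · by_cases h2 : a = v ∧ b = u
      · obtain ⟨rfl, rfl⟩ := h2
        simp [hne, hne.symm]
      · have h1' : ¬ (b = v ∧ a = u) := fun hc => h1 ⟨hc.2, hc.1⟩
        have h2' : ¬ (b = u ∧ a = v) := fun hc => h2 ⟨hc.2, hc.1⟩
        simp only [if_neg h1, if_neg h2, if_neg (fun hc : b = u ∧ a = v => h2 ⟨hc.2, hc.1⟩),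
          if_neg (fun hc : b = v ∧ a = u => h1 ⟨hc.2, hc.1⟩)]
        exact D.dir_iff a b hab

lemma dir_ne_self (D : Orient G) (v : V) : D.dir v v = false := by
  by_contra h
  exact (G.loopless.irrefl v) (D.adj_of_dir v v (by simpa using h))

lemma Orient.flip_inDeg_u (D : Orient G) (u v : V) (h : D.dir u v = true) :
    (D.flip u v h).inDeg u = D.inDeg u + 1 := by
  classical
  have hne : u ≠ v := (D.adj_of_dir _ _ h).ne
  have hvu : D.dir v u = false := by
    have := (D.dir_iff u v (D.adj_of_dir _ _ h)).mp h
    simpa using this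
  unfold Orient.inDeg
  have : Finset.univ.filter (fun a => (D.flip u v h).dir a u = true)
      = insert v (Finset.univ.filter (fun a => D.dir a u = true)) := by
    ext a
    simp only [Finset.mem_insert, Finset.mem_filter, Finset.mem_univ, true_and, Orient.flip]
    by_cases hav : a = v
    · subst hav
      simp [hne.symm, hvu]
    · simp only [if_neg (fun hc : a = u ∧ u = v => hne hc.2),
        if_neg (fun hc : a = v ∧ u = u => hav hc.1)]
      simp [hav]
  rw [this, Finset.card_insert_of_notMem (by simp [hvu])]

lemma Orient.flip_inDeg_v (D : Orient G) (u v : V) (h : D.dir u v = true) :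
    (D.flip u v h).inDeg v + 1 = D.inDeg v := by
  classical
  have hne : u ≠ v := (D.adj_of_dir _ _ h).ne
  unfold Orient.inDeg
  have : Finset.univ.filter (fun a => D.dir a v = true)
      = insert u (Finset.univ.filter (fun a => (D.flip u v h).dir a v = true)) := by
    ext a
    simp only [Finset.mem_insert, Finset.mem_filter, Finset.mem_univ, true_and, Orient.flip]
    by_cases hau : a = u
    · subst hau
      simp [h]
    · simp only [if_neg (fun hc : a = u ∧ v = v => hau hc.1),
        if_neg (fun hc : a = v ∧ v = u => hne hc.2.symm)]
      simp [hau]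
  rw [this, Finset.card_insert_of_notMem (by simp [Orient.flip, hne])]

lemma Orient.flip_inDeg_other (D : Orient G) (u v w : V) (h : D.dir u v = true)
    (hwu : w ≠ u) (hwv : w ≠ v) : (D.flip u v h).inDeg w = D.inDeg w := by
  classical
  unfold Orient.inDeg
  congr 1
  ext a
  simp only [Finset.mem_filter, Finset.mem_univ, true_and]
  simp only [Orient.flip]
  rw [if_neg (fun hc : a = u ∧ w = v => hwv hc.2), if_neg (fun hc : a = v ∧ w = u => hwu hc.2)]

lemma inDeg_le_card (D : Orient G) (w : V) : D.inDeg w ≤ Fintype.card V :=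
  le_trans (Finset.card_filter_le _ _) (le_of_eq (Finset.card_univ))

lemma sumSq_lt_flip (D : Orient G) (u v : V) (h : D.dir u v = true)
    (heq : D.inDeg u = D.inDeg v) :
    ∑ w, (D.inDeg w)^2 < ∑ w, ((D.flip u v h).inDeg w)^2 := by
  classical
  have hne : u ≠ v := (D.adj_of_dir _ _ h).ne
  have hu := D.flip_inDeg_u u v h
  have hv := D.flip_inDeg_v u v h
  set E := D.flip u v h with hE
  have huu : u ∈ (Finset.univ : Finset V) := Finset.mem_univ u
  have hvv : v ∈ (Finset.univ.erase u) := by simp [hne.symm]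
  rw [← Finset.add_sum_erase _ _ huu, ← Finset.add_sum_erase _ _ hvv,
    ← Finset.add_sum_erase _ (fun w => (E.inDeg w)^2) huu,
    ← Finset.add_sum_erase _ (fun w => (E.inDeg w)^2) hvv]
  have hrest : ∑ w ∈ (Finset.univ.erase u).erase v, (E.inDeg w)^2
      = ∑ w ∈ (Finset.univ.erase u).erase v, (D.inDeg w)^2 := by
    refine Finset.sum_congr rfl (fun w hw => ?_)
    simp only [Finset.mem_erase] at hw
    rw [D.flip_inDeg_other u v w h hw.2.1 hw.1]
  rw [hrest]
  have h1 : 1 ≤ D.inDeg v := by omega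
  set d := D.inDeg v with hd
  have : E.inDeg v = d - 1 := by omega
  rw [hu, this, heq]
  have hd1 : d - 1 + 1 = d := by omega
  nlinarith [sq_nonneg d, hd1]

lemma exists_proper (G : SimpleGraph V) : ∃ D : Orient G, D.Proper := by
  classical
  set S : Set ℕ := {n | ∃ D : Orient G, n = ∑ w, (D.inDeg w)^2} with hS
  have hne : S.Nonempty := ⟨_, someOrient G, rfl⟩
  have hbdd : BddAbove S := by
    refine ⟨Fintype.card V * (Fintype.card V)^2, ?_⟩
    rintro n ⟨D, rfl⟩
    calc ∑ w, (D.inDeg w)^2 ≤ ∑ _w : V, (Fintype.card V)^2 :=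
          Finset.sum_le_sum (fun w _ => Nat.pow_le_pow_left (inDeg_le_card D w) 2)
      _ = Fintype.card V * (Fintype.card V)^2 := by simp [Finset.sum_const, Finset.card_univ, mul_comm]
  obtain ⟨D, hD⟩ := Nat.sSup_mem hne hbdd
  refine ⟨D, fun u v hadj heq => ?_⟩
  have hkey : ∀ (a b : V), G.Adj a b → D.dir a b = true → D.inDeg a ≠ D.inDeg b := by
    intro a b hab hd habeq
    have hlt := sumSq_lt_flip D a b hd habeq
    have : (∑ w, ((D.flip a b hd).inDeg w)^2) ∈ S := ⟨_, rfl⟩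
    have hle := le_csSup hbdd this
    omega
  rcases Bool.eq_false_or_eq_true (D.dir u v) with h' | h'
  · exact hkey u v hadj h' heq
  · have hvu : D.dir v u = true := by
      by_contra hc
      have := (D.dir_iff u v hadj).mpr (by simpa using hc)
      simp [h'] at this
    exact hkey v u hadj.symm hvu heq.symm

lemma inDeg_eq_sum (D : Orient G) (w : V) :
    D.inDeg w = ∑ a, (if D.dir a w = true then 1 else 0) := by
  classical
  rw [Orient.inDeg, Finset.card_filter]

lemma dir_indicator_adj (D : Orient G) (a b : V) (hab : G.Adj a b) :
    (if D.dir a b = true then 1 else 0) + (if D.dir b a = true then 1 else 0) = 1 := by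
  rcases Bool.eq_false_or_eq_true (D.dir a b) with h' | h'
  · have : D.dir b a = false := by
      have := (D.dir_iff a b hab).mp h'
      simpa using this
    simp [h', this]
  · have : D.dir b a = true := by
      by_contra hc
      have := (D.dir_iff a b hab).mpr (by simpa using hc)
      simp [h'] at this
    simp [h', this]

lemma dir_indicator_nadj (D : Orient G) (a b : V) (hab : ¬ G.Adj a b) :
    (if D.dir a b = true then 1 else 0) + (if D.dir b a = true then 1 else 0) = 0 := by
  have h1 : D.dir a b = false := by
    by_contra hc
    exact hab (D.adj_of_dir a b (by simpa using hc))
  have h2 : D.dir b a = false := by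
    by_contra hc
    exact hab (D.adj_of_dir b a (by simpa using hc)).symm
  simp [h1, h2]

end Exist

section Count
variable {V : Type*} [Fintype V] (G : SimpleGraph V)

open scoped Classical in
lemma two_mul_inner (D : Orient G) :
    2 * (∑ a, ∑ b, (if D.dir a b = true then 1 else 0)) = 2 * Nat.card G.edgeSet := by
  classical
  have h1 : (∑ a, ∑ b, (if D.dir a b = true then 1 else 0))
      + (∑ a, ∑ b, (if D.dir a b = true then 1 else 0))
      = ∑ a, ∑ b, ((if D.dir a b = true then 1 else 0) + (if D.dir b a = true then 1 else 0)) := by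
    nth_rewrite 2 [show (∑ a, ∑ b, (if D.dir a b = true then 1 else 0))
      = ∑ a, ∑ b, (if D.dir b a = true then 1 else 0) from Finset.sum_comm]
    rw [← Finset.sum_add_distrib]
    exact Finset.sum_congr rfl fun a _ => (Finset.sum_add_distrib).symm
  have h2 : ∀ a b : V, ((if D.dir a b = true then 1 else 0) + (if D.dir b a = true then 1 else 0))
      = (if G.Adj a b then 1 else 0) := by
    intro a b
    by_cases hab : G.Adj a b
    · rw [dir_indicator_adj D a b hab, if_pos hab]
    · rw [dir_indicator_nadj D a b hab, if_neg hab]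
  have h3 : ∑ a, ∑ b, (if G.Adj a b then 1 else 0) = ∑ a, G.degree a := by
    refine Finset.sum_congr rfl (fun a _ => ?_)
    rw [← Finset.card_filter]
    rw [SimpleGraph.degree, SimpleGraph.neighborFinset_eq_filter]
  rw [two_mul, h1]
  simp_rw [h2]
  rw [h3, SimpleGraph.sum_degrees_eq_twice_card_edges, SimpleGraph.edgeFinset_card,
    Nat.card_eq_fintype_card]

end Count

section Join
variable {V1 V2 : Type*} (G1 : SimpleGraph V1) (G2 : SimpleGraph V2)

lemma join_adj_lr (a : V1) (b : V2) : (graphJoin G1 G2).Adj (.inl a) (.inr b) := trivial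
lemma join_adj_rl (b : V2) (a : V1) : (graphJoin G1 G2).Adj (.inr b) (.inl a) := trivial
lemma join_adj_ll {a b : V1} (h : G1.Adj a b) : (graphJoin G1 G2).Adj (.inl a) (.inl b) := h
lemma join_adj_rr {a b : V2} (h : G2.Adj a b) : (graphJoin G1 G2).Adj (.inr a) (.inr b) := h

/-- Restriction of an orientation of the join to the left part. -/
def restrL (D : Orient (graphJoin G1 G2)) : Orient G1 where
  dir a b := D.dir (.inl a) (.inl b)
  adj_of_dir a b h := D.adj_of_dir _ _ h
  dir_iff a b h := D.dir_iff _ _ (join_adj_ll G1 G2 h)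

def restrR (D : Orient (graphJoin G1 G2)) : Orient G2 where
  dir a b := D.dir (.inr a) (.inr b)
  adj_of_dir a b h := D.adj_of_dir _ _ h
  dir_iff a b h := D.dir_iff _ _ (join_adj_rr G1 G2 h)

end Join

/-- For the join `G = G1 ∧ G2` of two nonempty graphs with `n i` vertices and `m i`
edges, `min (m1/n1 + n2/2) (m2/n2 + n1/2) ≤ χ⃗(G)`. -/
theorem properOrientNum_join_lower {V1 V2 : Type*} [Fintype V1] [Fintype V2]
    [Nonempty V1] [Nonempty V2] (G1 : SimpleGraph V1) (G2 : SimpleGraph V2) :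
    min ((Nat.card G1.edgeSet : ℚ) / (Fintype.card V1) + (Fintype.card V2) / 2)
        ((Nat.card G2.edgeSet : ℚ) / (Fintype.card V2) + (Fintype.card V1) / 2)
      ≤ (properOrientNum (graphJoin G1 G2) : ℚ) := by
  classical
  set J := graphJoin G1 G2 with hJ
  set S : Set ℕ := {k | ∃ D : Orient J, D.Proper ∧ ∀ v, D.inDeg v ≤ k} with hS
  have hSne : S.Nonempty := by
    obtain ⟨D, hD⟩ := exists_proper J
    exact ⟨Fintype.card (V1 ⊕ V2), D, hD, fun v => inDeg_le_card D v⟩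
  set k := properOrientNum J with hkdef
  obtain ⟨D, hProper, hk⟩ : k ∈ S := Nat.sInf_mem hSne
  set n1 := Fintype.card V1 with hn1
  set n2 := Fintype.card V2 with hn2
  set m1 := Nat.card G1.edgeSet with hm1
  set m2 := Nat.card G2.edgeSet with hm2
  set E1 := ∑ a : V1, ∑ b : V1, (if D.dir (.inl a) (.inl b) = true then 1 else 0) with hE1def
  set E2 := ∑ a : V2, ∑ b : V2, (if D.dir (.inr a) (.inr b) = true then 1 else 0) with hE2def
  set c1 := ∑ b : V2, ∑ v : V1, (if D.dir (.inr b) (.inl v) = true then 1 else 0) with hc1def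
  set c2 := ∑ a : V1, ∑ w : V2, (if D.dir (.inl a) (.inr w) = true then 1 else 0) with hc2def
  -- edge counts
  have hE1 : 2 * E1 = 2 * m1 := two_mul_inner G1 (restrL G1 G2 D)
  have hE2 : 2 * E2 = 2 * m2 := two_mul_inner G2 (restrR G1 G2 D)
  -- cross count
  have hcross : c1 + c2 = n2 * n1 := by
    have hc2' : c2 = ∑ w : V2, ∑ a : V1, (if D.dir (.inl a) (.inr w) = true then 1 else 0) :=
      Finset.sum_comm
    rw [hc1def, hc2', ← Finset.sum_add_distrib]
    have : ∀ b : V2, (∑ v : V1, (if D.dir (.inr b) (.inl v) = true then 1 else 0))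
        + (∑ v : V1, (if D.dir (.inl v) (.inr b) = true then 1 else 0))
        = ∑ _v : V1, 1 := by
      intro b
      rw [← Finset.sum_add_distrib]
      exact Finset.sum_congr rfl fun v _ => dir_indicator_adj D _ _ (join_adj_rl G1 G2 b v)
    simp_rw [this]
    simp [hn1, hn2, Finset.card_univ]
  -- sums of indegrees per side
  have hside1 : E1 + c1 ≤ n1 * k := by
    have hsplit : ∀ v : V1, D.inDeg (Sum.inl v)
        = (∑ a : V1, if D.dir (Sum.inl a) (Sum.inl v) = true then 1 else 0)
        + (∑ b : V2, if D.dir (Sum.inr b) (Sum.inl v) = true then 1 else 0) := by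
      intro v
      rw [inDeg_eq_sum]
      exact Fintype.sum_sum_type _
    have h1 : ∑ v : V1, D.inDeg (Sum.inl v) = E1 + c1 := by
      simp_rw [hsplit]
      rw [Finset.sum_add_distrib]
      congr 1
      · exact Finset.sum_comm
      · exact Finset.sum_comm
    have h2 : ∑ v : V1, D.inDeg (Sum.inl v) ≤ n1 * k := by
      calc ∑ v : V1, D.inDeg (Sum.inl v) ≤ ∑ _v : V1, k :=
            Finset.sum_le_sum fun v _ => hk (Sum.inl v)
        _ = n1 * k := by simp [hn1, Finset.card_univ, mul_comm]
    omega
  have hside2 : E2 + c2 ≤ n2 * k := by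
    have hsplit : ∀ v : V2, D.inDeg (Sum.inr v)
        = (∑ a : V1, if D.dir (Sum.inl a) (Sum.inr v) = true then 1 else 0)
        + (∑ b : V2, if D.dir (Sum.inr b) (Sum.inr v) = true then 1 else 0) := by
      intro v
      rw [inDeg_eq_sum]
      exact Fintype.sum_sum_type _
    have h1 : ∑ v : V2, D.inDeg (Sum.inr v) = c2 + E2 := by
      simp_rw [hsplit]
      rw [Finset.sum_add_distrib]
      congr 1
      · exact Finset.sum_comm
      · exact Finset.sum_comm
    have h2 : ∑ v : V2, D.inDeg (Sum.inr v) ≤ n2 * k := by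
      calc ∑ v : V2, D.inDeg (Sum.inr v) ≤ ∑ _v : V2, k :=
            Finset.sum_le_sum fun v _ => hk (Sum.inr v)
        _ = n2 * k := by simp [hn2, Finset.card_univ, mul_comm]
    omega
  -- final arithmetic
  have hn1pos : 0 < n1 := Fintype.card_pos
  have hn2pos : 0 < n2 := Fintype.card_pos
  have hn1Q : (0:ℚ) < (n1:ℚ) := by exact_mod_cast hn1pos
  have hn2Q : (0:ℚ) < (n2:ℚ) := by exact_mod_cast hn2pos
  rcases (by omega : n2 * n1 ≤ 2 * c1 ∨ n2 * n1 ≤ 2 * c2) with hc | hc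
  · refine le_trans (min_le_left _ _) ?_
    have key : 2 * m1 + n2 * n1 ≤ 2 * (n1 * k) := by omega
    have keyQ : 2 * (m1:ℚ) + n2 * n1 ≤ 2 * (n1 * k) := by exact_mod_cast key
    rw [div_add_div _ _ (ne_of_gt hn1Q) (two_ne_zero), div_le_iff₀ (by positivity)]
    ring_nf
    nlinarith [keyQ]
  · refine le_trans (min_le_right _ _) ?_
    have key : 2 * m2 + n2 * n1 ≤ 2 * (n2 * k) := by omega
    have keyQ : 2 * (m2:ℚ) + n2 * n1 ≤ 2 * (n2 * k) := by exact_mod_cast key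
    rw [div_add_div _ _ (ne_of_gt hn2Q) (two_ne_zero), div_le_iff₀ (by positivity)]
    ring_nf
    nlinarith [keyQ]
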